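/- Let p be a prime and λ ∈ [0, 1]. Suppose {A_1, B_1, C_1} ⊆ S^{k_1−1} and {A_2, B_2, C_2} ⊆ S^{k_2−1} are spherical sub-p-toral three-point sets. Then there exist m and a spherical sub-p-toral three-point set {A, B, C} ⊆ S^{m−1} with ‖A − B‖^2 = λ‖A_1 − B_1‖^2 + (1−λ)‖A_2 − B_2‖^2, ‖A − C‖^2 = λ‖A_1 − C_1‖^2 + (1−λ)‖A_2 − C_2‖^2, and ‖B − C‖^2 = λ‖B_1 − C_1‖^2 + (1−λ)‖B_2 − C_2‖^2. Hence the set of triples of squared side-lengths of spherical sub-p-toral triangles is convex. -/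

import Mathlib

theorem WithLp.equiv_symm_fst {p : ENNReal} {α β : Type*} (x : α) (y : β) :
    ((WithLp.equiv p (α × β)).symm (x, y)).fst = x := rfl

theorem WithLp.equiv_symm_snd {p : ENNReal} {α β : Type*} (x : α) (y : β) :
    ((WithLp.equiv p (α × β)).symm (x, y)).snd = y := rfl

noncomputable section SubPToralAux

variable {E₁ E₂ : Type*} [NormedAddCommGroup E₁] [InnerProductSpace ℝ E₁]
  [NormedAddCommGroup E₂] [InnerProductSpace ℝ E₂]

/-- Product of two linear isometry equivalences on the `L²` product. -/
def prodIsoL2 (g₁ : E₁ ≃ₗᵢ[ℝ] E₁) (g₂ : E₂ ≃ₗᵢ[ℝ] E₂) :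
    WithLp 2 (E₁ × E₂) ≃ₗᵢ[ℝ] WithLp 2 (E₁ × E₂) where
  toLinearEquiv := (WithLp.linearEquiv 2 ℝ (E₁ × E₂)).trans
    ((g₁.toLinearEquiv.prodCongr g₂.toLinearEquiv).trans (WithLp.linearEquiv 2 ℝ (E₁ × E₂)).symm)
  norm_map' x := by
    have h : (((WithLp.linearEquiv 2 ℝ (E₁ × E₂)).trans
        ((g₁.toLinearEquiv.prodCongr g₂.toLinearEquiv).trans
          (WithLp.linearEquiv 2 ℝ (E₁ × E₂)).symm)) x)
        = (WithLp.equiv 2 (E₁ × E₂)).symm (g₁ x.fst, g₂ x.snd) := rfl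
    rw [h, WithLp.prod_norm_eq_of_L2, WithLp.prod_norm_eq_of_L2,
      WithLp.equiv_symm_fst, WithLp.equiv_symm_snd]
    simp

lemma prodIsoL2_apply (g₁ : E₁ ≃ₗᵢ[ℝ] E₁) (g₂ : E₂ ≃ₗᵢ[ℝ] E₂) (x : WithLp 2 (E₁ × E₂)) :
    prodIsoL2 g₁ g₂ x = (WithLp.equiv 2 (E₁ × E₂)).symm (g₁ x.fst, g₂ x.snd) := rfl

variable {V : Type*} [NormedAddCommGroup V] [NormedSpace ℝ V]

/-- Conjugating the product of isometries by an isometry `F`. -/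
def prodConjHom (F : WithLp 2 (E₁ × E₂) ≃ₗᵢ[ℝ] V) :
    ((E₁ ≃ₗᵢ[ℝ] E₁) × (E₂ ≃ₗᵢ[ℝ] E₂)) →* (V ≃ₗᵢ[ℝ] V) where
  toFun g := (F.symm.trans (prodIsoL2 g.1 g.2)).trans F
  map_one' := by
    ext x
    simp only [prodIsoL2_apply, LinearIsometryEquiv.trans_apply, LinearIsometryEquiv.coe_one,
      id_eq]
    exact F.apply_symm_apply x
  map_mul' g g' := by
    ext x
    simp [prodIsoL2_apply]

lemma prodConjHom_apply (F : WithLp 2 (E₁ × E₂) ≃ₗᵢ[ℝ] V)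
    (g : (E₁ ≃ₗᵢ[ℝ] E₁) × (E₂ ≃ₗᵢ[ℝ] E₂)) (y : WithLp 2 (E₁ × E₂)) :
    prodConjHom F g (F y) = F (prodIsoL2 g.1 g.2 y) := by
  simp [prodConjHom]

lemma prodConjHom_injective (F : WithLp 2 (E₁ × E₂) ≃ₗᵢ[ℝ] V) :
    Function.Injective (prodConjHom F) := by
  intro g g' h
  have key : ∀ y : WithLp 2 (E₁ × E₂), prodIsoL2 g.1 g.2 y = prodIsoL2 g'.1 g'.2 y := by
    intro y
    have h2 := congrArg (fun e : V ≃ₗᵢ[ℝ] V => e (F y)) h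
    simp only [prodConjHom_apply] at h2
    exact F.injective h2
  have h1 : g.1 = g'.1 := by
    ext x
    have := congrArg (fun z : WithLp 2 (E₁ × E₂) => z.fst)
      (key ((WithLp.equiv 2 (E₁ × E₂)).symm (x, 0)))
    simpa [prodIsoL2_apply] using this
  have h2 : g.2 = g'.2 := by
    ext x
    have := congrArg (fun z : WithLp 2 (E₁ × E₂) => z.snd)
      (key ((WithLp.equiv 2 (E₁ × E₂)).symm (0, x)))
    simpa [prodIsoL2_apply] using this
  exact Prod.ext h1 h2

/-- `(Fin α₁ → M) × (Fin α₂ → M) ≃+ (Fin (α₁+α₂) → M)`. -/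
def arrowSumAddEquiv (α₁ α₂ : ℕ) (M : Type*) [AddMonoid M] :
    ((Fin α₁ → M) × (Fin α₂ → M)) ≃+ (Fin (α₁ + α₂) → M) where
  toEquiv := (Equiv.sumArrowEquivProdArrow _ _ M).symm.trans
    (finSumFinEquiv.arrowCongr (Equiv.refl M))
  map_add' f g := by
    funext j
    rcases h : finSumFinEquiv.symm j with i | i <;>
      simp [Equiv.sumArrowEquivProdArrow, Equiv.arrowCongr, h]

end SubPToralAux


/-- A set `X` of unit vectors in `ℝ^k` is *spherical sub-p-toral* if some image of `X`
under a linear isometric embedding into a possibly larger `ℝ^n` is contained in the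
orbit of a unit vector under a subgroup of the orthogonal group of `ℝ^n` isomorphic to
`(ℤ/p)^α`. -/
def SphericalSubPToral (p : ℕ) {k : ℕ} (X : Set (EuclideanSpace ℝ (Fin k))) : Prop :=
  ∃ n : ℕ, k ≤ n ∧
    ∃ ι : EuclideanSpace ℝ (Fin k) →ₗᵢ[ℝ] EuclideanSpace ℝ (Fin n),
      ∃ (G : Subgroup (EuclideanSpace ℝ (Fin n) ≃ₗᵢ[ℝ] EuclideanSpace ℝ (Fin n))) (α : ℕ),
        Nonempty (G ≃* Multiplicative (Fin α → ZMod p)) ∧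
        ∃ v : EuclideanSpace ℝ (Fin n), ‖v‖ = 1 ∧
          ∀ x ∈ X, ∃ g ∈ G,
            (g : EuclideanSpace ℝ (Fin n) ≃ₗᵢ[ℝ] EuclideanSpace ℝ (Fin n)) v = ι x

/-- **Convexity of squared side lengths of spherical sub-p-toral triangles.** Given two
spherical sub-p-toral triples `{A₁, B₁, C₁} ⊆ S^{k₁-1}` and `{A₂, B₂, C₂} ⊆ S^{k₂-1}`
and `λ ∈ [0, 1]`, there is a spherical sub-p-toral triple `{A, B, C}` on some sphere
whose squared side lengths are the `λ`-convex combinations of the given ones. -/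
theorem sphericalSubPToral_convex (p : ℕ) (hp : p.Prime) (lam : ℝ)
    (hlam₀ : 0 ≤ lam) (hlam₁ : lam ≤ 1) {k₁ k₂ : ℕ}
    (A₁ B₁ C₁ : EuclideanSpace ℝ (Fin k₁)) (A₂ B₂ C₂ : EuclideanSpace ℝ (Fin k₂))
    (hA₁ : ‖A₁‖ = 1) (hB₁ : ‖B₁‖ = 1) (hC₁ : ‖C₁‖ = 1)
    (hA₂ : ‖A₂‖ = 1) (hB₂ : ‖B₂‖ = 1) (hC₂ : ‖C₂‖ = 1)
    (h₁ : SphericalSubPToral p ({A₁, B₁, C₁} : Set (EuclideanSpace ℝ (Fin k₁))))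
    (h₂ : SphericalSubPToral p ({A₂, B₂, C₂} : Set (EuclideanSpace ℝ (Fin k₂)))) :
    ∃ m : ℕ, ∃ A B C : EuclideanSpace ℝ (Fin m),
      ‖A‖ = 1 ∧ ‖B‖ = 1 ∧ ‖C‖ = 1 ∧
      SphericalSubPToral p ({A, B, C} : Set (EuclideanSpace ℝ (Fin m))) ∧
      ‖A - B‖ ^ 2 = lam * ‖A₁ - B₁‖ ^ 2 + (1 - lam) * ‖A₂ - B₂‖ ^ 2 ∧
      ‖A - C‖ ^ 2 = lam * ‖A₁ - C₁‖ ^ 2 + (1 - lam) * ‖A₂ - C₂‖ ^ 2 ∧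
      ‖B - C‖ ^ 2 = lam * ‖B₁ - C₁‖ ^ 2 + (1 - lam) * ‖B₂ - C₂‖ ^ 2 := by
  classical
  obtain ⟨n₁, hk₁, ι₁, G₁, α₁, ⟨e₁⟩, v₁, hv₁, cover₁⟩ := h₁
  obtain ⟨n₂, hk₂, ι₂, G₂, α₂, ⟨e₂⟩, v₂, hv₂, cover₂⟩ := h₂
  set s : ℝ := Real.sqrt lam with hs
  set t : ℝ := Real.sqrt (1 - lam) with ht
  have hs2 : s ^ 2 = lam := Real.sq_sqrt hlam₀
  have ht2 : t ^ 2 = 1 - lam := Real.sq_sqrt (by linarith)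
  have hs0 : 0 ≤ s := Real.sqrt_nonneg _
  have ht0 : 0 ≤ t := Real.sqrt_nonneg _
  set F : WithLp 2 (EuclideanSpace ℝ (Fin n₁) × EuclideanSpace ℝ (Fin n₂)) ≃ₗᵢ[ℝ]
      EuclideanSpace ℝ (Fin (n₁ + n₂)) :=
    (((EuclideanSpace.basisFun (Fin n₁) ℝ).prod
      (EuclideanSpace.basisFun (Fin n₂) ℝ)).reindex finSumFinEquiv).repr with hF
  set P : EuclideanSpace ℝ (Fin n₁) → EuclideanSpace ℝ (Fin n₂) →
      EuclideanSpace ℝ (Fin (n₁ + n₂)) :=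
    fun x y => F ((WithLp.equiv 2 _).symm (s • x, t • y)) with hPdef
  have keynorm : ∀ (x₁ y₁ : EuclideanSpace ℝ (Fin n₁)) (x₂ y₂ : EuclideanSpace ℝ (Fin n₂)),
      ‖P x₁ x₂ - P y₁ y₂‖ ^ 2 = lam * ‖x₁ - y₁‖ ^ 2 + (1 - lam) * ‖x₂ - y₂‖ ^ 2 := by
    intro x₁ y₁ x₂ y₂
    have hsub : P x₁ x₂ - P y₁ y₂
        = F ((WithLp.equiv 2 _).symm (s • (x₁ - y₁), t • (x₂ - y₂))) := by
      rw [hPdef]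
      simp only [← F.map_sub]
      rw [smul_sub, smul_sub]
      rfl
    rw [hsub, F.norm_map, WithLp.prod_norm_sq_eq_of_L2, WithLp.equiv_symm_fst,
      WithLp.equiv_symm_snd, norm_smul, norm_smul, mul_pow, mul_pow,
      Real.norm_eq_abs, Real.norm_eq_abs, abs_of_nonneg hs0, abs_of_nonneg ht0, hs2, ht2]
  have hP0 : P 0 0 = 0 := by
    rw [hPdef]
    simp only [smul_zero]
    exact F.map_eq_zero_iff.mpr rfl
  have normsq : ∀ (x₁ : EuclideanSpace ℝ (Fin n₁)) (x₂ : EuclideanSpace ℝ (Fin n₂)),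
      ‖x₁‖ = 1 → ‖x₂‖ = 1 → ‖P x₁ x₂‖ = 1 := by
    intro x₁ x₂ h1 h2
    have := keynorm x₁ 0 x₂ 0
    rw [hP0, sub_zero, sub_zero, sub_zero, h1, h2] at this
    rw [← Real.sqrt_sq (norm_nonneg (P x₁ x₂)), this]
    simp
  have normι₁ : ∀ x y : EuclideanSpace ℝ (Fin k₁), ‖ι₁ x - ι₁ y‖ = ‖x - y‖ := by
    intro x y; rw [← ι₁.map_sub, ι₁.norm_map]
  have normι₂ : ∀ x y : EuclideanSpace ℝ (Fin k₂), ‖ι₂ x - ι₂ y‖ = ‖x - y‖ := by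
    intro x y; rw [← ι₂.map_sub, ι₂.norm_map]
  refine ⟨n₁ + n₂, P (ι₁ A₁) (ι₂ A₂), P (ι₁ B₁) (ι₂ B₂), P (ι₁ C₁) (ι₂ C₂),
    normsq _ _ (by rw [ι₁.norm_map]; exact hA₁) (by rw [ι₂.norm_map]; exact hA₂),
    normsq _ _ (by rw [ι₁.norm_map]; exact hB₁) (by rw [ι₂.norm_map]; exact hB₂),
    normsq _ _ (by rw [ι₁.norm_map]; exact hC₁) (by rw [ι₂.norm_map]; exact hC₂),
    ?_,
    by rw [keynorm, normι₁, normι₂],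
    by rw [keynorm, normι₁, normι₂],
    by rw [keynorm, normι₁, normι₂]⟩
  refine ⟨n₁ + n₂, le_rfl, LinearIsometry.id, (G₁.prod G₂).map (prodConjHom F), α₁ + α₂,
    ⟨((Subgroup.equivMapOfInjective _ _ (prodConjHom_injective F)).symm.trans
      ((Subgroup.prodEquiv G₁ G₂).trans
       ((e₁.prodCongr e₂).trans
        ((MulEquiv.prodMultiplicative _ _).symm.trans
         (AddEquiv.toMultiplicative (arrowSumAddEquiv α₁ α₂ (ZMod p)))))))⟩,
    P v₁ v₂, normsq _ _ hv₁ hv₂, ?_⟩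
  have orb : ∀ (a₁ : EuclideanSpace ℝ (Fin k₁)) (a₂ : EuclideanSpace ℝ (Fin k₂)),
      a₁ ∈ ({A₁, B₁, C₁} : Set (EuclideanSpace ℝ (Fin k₁))) →
      a₂ ∈ ({A₂, B₂, C₂} : Set (EuclideanSpace ℝ (Fin k₂))) →
      ∃ g ∈ (G₁.prod G₂).map (prodConjHom F),
        (g : EuclideanSpace ℝ (Fin (n₁ + n₂)) ≃ₗᵢ[ℝ] EuclideanSpace ℝ (Fin (n₁ + n₂)))
          (P v₁ v₂) = P (ι₁ a₁) (ι₂ a₂) := by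
    intro a₁ a₂ ha₁ ha₂
    obtain ⟨g₁, hg₁, hgv₁⟩ := cover₁ a₁ ha₁
    obtain ⟨g₂, hg₂, hgv₂⟩ := cover₂ a₂ ha₂
    refine ⟨prodConjHom F (g₁, g₂),
      Subgroup.mem_map_of_mem _ (Subgroup.mem_prod.mpr ⟨hg₁, hg₂⟩), ?_⟩
    rw [hPdef]
    rw [prodConjHom_apply]
    congr 1
    rw [prodIsoL2_apply, WithLp.equiv_symm_fst, WithLp.equiv_symm_snd, map_smul, map_smul,
      hgv₁, hgv₂]
  intro x hx
  simp only [Set.mem_insert_iff, Set.mem_singleton_iff] at hx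
  rcases hx with rfl | rfl | rfl
  · simpa using orb A₁ A₂ (by simp) (by simp)
  · simpa using orb B₁ B₂ (by simp) (by simp)
  · simpa using orb C₁ C₂ (by simp) (by simp)
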